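/- Let G be a nontrivial finite group with trivial solvable radical, let M₁, …, M_r be the distinct minimal normal subgroups of G, suppose each M_i is isomorphic to a direct product of n_i copies of a nonabelian finite simple group T_i, and set n = n₁ + ⋯ + n_r and k_i = k*(T_i). If c₂ > 0 is a constant such that log|Aut(T)| < c₂ · (log k*(T))² · log log k*(T) holds for every nonabelian finite simple group T, then log|G| < n · log n + c₂ · Σ_{i=1}^{r} n_i · (log k_i)² · log log k_i. -/

import Mathlib

/-- `k*(T)`: the number of orbits of the natural action of `Aut(T)` on `T`. -/
noncomputable def numAutOrbits (T : Type*) [Group T] : ℕ :=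
  Nat.card (Quotient (MulAction.orbitRel (MulAut T) T))

/-- `N` is a minimal normal subgroup of `G`. -/
def IsMinimalNormal {G : Type*} [Group G] (N : Subgroup G) : Prop :=
  N ≠ ⊥ ∧ N.Normal ∧ ∀ K : Subgroup G, K.Normal → K ≤ N → K ≠ ⊥ → K = N

/- ### Auxiliary lemmas -/

lemma MinNormalAux.card_lt_of_lt {G : Type*} [Group G] [Finite G] {H K : Subgroup G}
    (h : H < K) : Nat.card H < Nat.card K := by
  have h1 : (H : Set G) ⊂ (K : Set G) := by exact_mod_cast h
  have := Set.ncard_lt_ncard h1 (Set.toFinite _)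
  rwa [← Nat.card_coe_set_eq, ← Nat.card_coe_set_eq] at this

/-- Every nontrivial normal subgroup of a finite group contains a minimal normal subgroup. -/
lemma MinNormalAux.exists_minimalNormal_le {G : Type*} [Group G] [Finite G] (c : ℕ) :
    ∀ (K : Subgroup G), Nat.card K ≤ c → K.Normal → K ≠ ⊥ →
    ∃ N : Subgroup G, IsMinimalNormal N ∧ N ≤ K := by
  induction c with
  | zero => intro K hc _ _; exact absurd hc (by simpa using Nat.card_pos.ne')
  | succ c ih =>
    intro K hc hK hKb
    by_cases h : ∀ K' : Subgroup G, K'.Normal → K' ≤ K → K' ≠ ⊥ → K' = K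
    · exact ⟨K, ⟨hKb, hK, h⟩, le_rfl⟩
    · push_neg at h
      obtain ⟨K', hn', hle', hb', hne'⟩ := h
      have hlt : Nat.card K' < Nat.card K :=
        MinNormalAux.card_lt_of_lt (lt_of_le_of_ne hle' hne')
      obtain ⟨N, hN, hNle⟩ := ih K' (by omega) hn' hb'
      exact ⟨N, hN, hNle.trans hle'⟩

section FactorAux

variable {T : Type*} [Group T] {m : ℕ}

/-- If a normal subgroup of `T^m` (with `T` nonabelian simple) contains an element with a
nontrivial coordinate `b`, it contains the whole `b`-th coordinate factor. -/
lemma MinNormalAux.factor_le_of_mem_normal (hs : IsSimpleGroup T)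
    (hnab : ¬ ∀ a b : T, a * b = b * a)
    (N : Subgroup (Fin m → T)) (hN : N.Normal) {x : Fin m → T} (hx : x ∈ N)
    {b : Fin m} (hxb : x b ≠ 1) :
    (MonoidHom.mulSingle (fun _ : Fin m => T) b).range ≤ N := by
  classical
  set K := N.comap (MonoidHom.mulSingle (fun _ : Fin m => T) b) with hKdef
  have hKn : K.Normal := hN.comap _
  have hxc : ∃ t : T, t * x b ≠ x b * t := by
    by_contra h
    push_neg at h
    have hcen : x b ∈ Subgroup.center T := Subgroup.mem_center_iff.2 h
    haveI := hs
    rcases (Subgroup.center T).normal_of_characteristic.eq_bot_or_eq_top with hc | hc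
    · rw [hc] at hcen; exact hxb (by simpa using hcen)
    · refine hnab fun a c => ?_
      have : c ∈ Subgroup.center T := by rw [hc]; trivial
      exact Subgroup.mem_center_iff.1 this a
  obtain ⟨t, ht⟩ := hxc
  have hz : (Pi.mulSingle b t) * x * (Pi.mulSingle b t)⁻¹ * x⁻¹
      = Pi.mulSingle b (t * x b * t⁻¹ * (x b)⁻¹) := by
    funext c
    rcases eq_or_ne c b with rfl | hc
    · simp [Pi.mul_apply, Pi.inv_apply]
    · simp [Pi.mul_apply, Pi.inv_apply, Pi.mulSingle_eq_of_ne hc]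
  have hzN : Pi.mulSingle b (t * x b * t⁻¹ * (x b)⁻¹) ∈ N := by
    rw [← hz]
    exact mul_mem (hN.conj_mem x hx (Pi.mulSingle b t)) (inv_mem hx)
  have hKne : K ≠ ⊥ := by
    intro hbot
    have : t * x b * t⁻¹ * (x b)⁻¹ ∈ K := by
      simpa [hKdef, Subgroup.mem_comap] using hzN
    rw [hbot, Subgroup.mem_bot] at this
    apply ht
    have h2 : t * x b * t⁻¹ = x b := by
      have := mul_eq_one_iff_eq_inv.1 this
      simpa using this
    calc t * x b = (t * x b * t⁻¹) * t := by group
    _ = x b * t := by rw [h2]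
  have hKtop : K = ⊤ := hKn.eq_bot_or_eq_top.resolve_left hKne
  rintro _ ⟨s, rfl⟩
  have : s ∈ K := by rw [hKtop]; trivial
  exact this

/-- An automorphism of `T^m` maps each coordinate factor onto a coordinate factor. -/
lemma MinNormalAux.exists_factor_map [Finite T] (hs : IsSimpleGroup T)
    (hnab : ¬ ∀ a b : T, a * b = b * a)
    (φ : MulAut (Fin m → T)) (a : Fin m) :
    ∃ b : Fin m, ((MonoidHom.mulSingle (fun _ : Fin m => T) a).range.map φ.toMonoidHom)
      = (MonoidHom.mulSingle (fun _ : Fin m => T) b).range := by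
  classical
  haveI : Nontrivial T := hs.toNontrivial
  set N := (MonoidHom.mulSingle (fun _ : Fin m => T) a).range.map φ.toMonoidHom with hNdef
  have hNn : N.Normal := by
    have h1 : ((MonoidHom.mulSingle (fun _ : Fin m => T) a).range).Normal := by
      constructor
      rintro _ ⟨s, rfl⟩ g
      refine ⟨g a * s * (g a)⁻¹, ?_⟩
      funext c
      rcases eq_or_ne c a with rfl | hc
      · simp [Pi.mul_apply, Pi.inv_apply]
      · simp [Pi.mul_apply, Pi.inv_apply, Pi.mulSingle_eq_of_ne hc]
    exact Subgroup.Normal.map h1 _ (MulEquiv.surjective φ)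
  obtain ⟨t, ht⟩ := exists_ne (1 : T)
  have hxN : φ (Pi.mulSingle a t) ∈ N := ⟨Pi.mulSingle a t, ⟨t, rfl⟩, rfl⟩
  have hxne : φ (Pi.mulSingle a t) ≠ 1 := by
    intro h
    exact ht (by simpa using h)
  have hb : ∃ b, φ (Pi.mulSingle a t) b ≠ 1 := by
    by_contra h
    push_neg at h
    exact hxne (funext h)
  obtain ⟨b, hb⟩ := hb
  have hle : (MonoidHom.mulSingle (fun _ : Fin m => T) b).range ≤ N :=
    MinNormalAux.factor_le_of_mem_normal hs hnab N hNn hxN hb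
  refine ⟨b, ?_⟩
  have hcard1 : Nat.card N = Nat.card T := by
    rw [hNdef]
    have e1 := Subgroup.equivMapOfInjective
      (MonoidHom.mulSingle (fun _ : Fin m => T) a).range φ.toMonoidHom φ.injective
    have e2 := MonoidHom.ofInjective (f := MonoidHom.mulSingle (fun _ : Fin m => T) a)
      (Pi.mulSingle_injective (M := fun _ : Fin m => T) a)
    rw [← Nat.card_congr e1.toEquiv, ← Nat.card_congr e2.toEquiv]
  have hcard2 : Nat.card T = Nat.card (MonoidHom.mulSingle (fun _ : Fin m => T) b).range := by
    have e2 := MonoidHom.ofInjective (f := MonoidHom.mulSingle (fun _ : Fin m => T) b)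
      (Pi.mulSingle_injective (M := fun _ : Fin m => T) b)
    exact Nat.card_congr e2.toEquiv
  exact (Subgroup.eq_of_le_of_card_ge hle (le_of_eq (hcard1.trans hcard2))).symm

/-- The automorphism group of `T^m` has at most `m^m * |Aut T|^m` elements. -/
lemma MinNormalAux.card_mulAut_pi_le {T : Type*} [Group T] [Finite T] (hs : IsSimpleGroup T)
    (hnab : ¬ ∀ a b : T, a * b = b * a) (m : ℕ) :
    Nat.card (MulAut (Fin m → T)) ≤ m ^ m * Nat.card (MulAut T) ^ m := by
  classical
  have key : ∀ (φ : MulAut (Fin m → T)) (a : Fin m),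
      ∃ (b : Fin m) (ψ : MulAut T), ∀ t : T, φ (Pi.mulSingle a t) = Pi.mulSingle b (ψ t) := by
    intro φ a
    obtain ⟨b, hb⟩ := MinNormalAux.exists_factor_map hs hnab φ a
    set ψ₀ : T →* T := (Pi.evalMonoidHom (fun _ : Fin m => T) b).comp
      (φ.toMonoidHom.comp (MonoidHom.mulSingle (fun _ : Fin m => T) a)) with hψ₀
    have hkey : ∀ t : T, φ (Pi.mulSingle a t) = Pi.mulSingle b (ψ₀ t) := by
      intro t
      have h1 : φ (Pi.mulSingle a t) ∈ (MonoidHom.mulSingle (fun _ : Fin m => T) b).range := by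
        rw [← hb]; exact ⟨Pi.mulSingle a t, ⟨t, rfl⟩, rfl⟩
      obtain ⟨s, hsel⟩ := h1
      have hψt : ψ₀ t = s := by
        have := congrFun hsel b
        simpa [hψ₀] using this.symm
      rw [hψt, ← hsel]
      rfl
    have hinj : Function.Injective ψ₀ := by
      refine (injective_iff_map_eq_one ψ₀).2 fun t h => ?_
      have h1 : φ (Pi.mulSingle a t) = 1 := by
        rw [hkey t, h]; simp
      have h2 : Pi.mulSingle a t = (1 : Fin m → T) := φ.injective (by simpa using h1)
      simpa using congrFun h2 a
    have hbij := Finite.injective_iff_bijective.1 hinj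
    exact ⟨b, MulEquiv.ofBijective ψ₀ hbij, fun t => hkey t⟩
  set F : MulAut (Fin m → T) → (Fin m → Fin m × MulAut T) := fun φ a =>
    ((key φ a).choose, (key φ a).choose_spec.choose) with hF
  have hFinj : Function.Injective F := by
    intro φ φ' h
    have hmain : ∀ (a : Fin m) (t : T), φ (Pi.mulSingle a t) = φ' (Pi.mulSingle a t) := by
      intro a t
      have h1 := (key φ a).choose_spec.choose_spec t
      have h2 := (key φ' a).choose_spec.choose_spec t
      have hfa := congrFun h a
      rw [h1, h2]
      exact congrArg (fun p : Fin m × MulAut T =>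
        Pi.mulSingle (M := fun _ : Fin m => T) p.1 (p.2 t)) hfa
    have : φ.toMonoidHom = φ'.toMonoidHom := MonoidHom.pi_ext fun i x => hmain i x
    refine DFunLike.ext _ _ fun x => ?_
    exact DFunLike.congr_fun this x
  have hle := Nat.card_le_card_of_injective F hFinj
  calc Nat.card (MulAut (Fin m → T)) ≤ Nat.card (Fin m → Fin m × MulAut T) := hle
    _ = m ^ m * Nat.card (MulAut T) ^ m := by
        simp [Nat.card_pi, Nat.card_prod, Finset.prod_const, mul_pow]

end FactorAux

section MainAux

variable (G : Type) [Group G] [Finite G] [Nontrivial G]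
    (r : ℕ) (M : Fin r → Subgroup G)
    (hmin : ∀ i, IsMinimalNormal (M i))
    (hall : ∀ N : Subgroup G, IsMinimalNormal N → ∃ i, N = M i)
    (n : Fin r → ℕ) (T : Fin r → Type) [∀ i, Group (T i)] [∀ i, Finite (T i)]
    (hnonab : ∀ i, ¬ ∀ a b : T i, a * b = b * a)
    (hiso : ∀ i, Nonempty ((M i) ≃* (Fin (n i) → T i)))

set_option linter.unusedSectionVars false

include hmin hiso in
lemma MinNormalAux.hn_pos : ∀ i, 0 < n i := by
  intro i
  rcases Nat.eq_zero_or_pos (n i) with h | h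
  · exfalso
    obtain ⟨e⟩ := hiso i
    apply (hmin i).1
    rw [Subgroup.eq_bot_iff_forall]
    intro x hx
    have : (⟨x, hx⟩ : M i) = 1 := by
      apply e.injective
      haveI : IsEmpty (Fin (n i)) := by rw [h]; infer_instance
      apply Subsingleton.elim
    simpa [Subtype.ext_iff] using this
  · exact h

include hmin hall hnonab hiso in
lemma MinNormalAux.centralizers_trivial :
    (⨅ i, Subgroup.centralizer (M i : Set G)) = ⊥ := by
  classical
  set C : Subgroup G := ⨅ i, Subgroup.centralizer (M i : Set G) with hC
  by_contra hne
  have hCn : C.Normal := by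
    constructor
    intro c hc g
    rw [hC, Subgroup.mem_iInf] at hc ⊢
    intro i
    rw [Subgroup.mem_centralizer_iff]
    intro x hx
    have hx' : g⁻¹ * x * g ∈ M i := by
      have := (hmin i).2.1.conj_mem' x hx g
      simpa using this
    have := Subgroup.mem_centralizer_iff.1 (hc i) _ hx'
    have h2 : x * (g * c * g⁻¹) = g * ((g⁻¹ * x * g) * c) * g⁻¹ := by group
    rw [h2, this]
    group
  obtain ⟨N, hN, hNle⟩ :=
    MinNormalAux.exists_minimalNormal_le (Nat.card C) C le_rfl hCn hne
  obtain ⟨j, rfl⟩ := hall N hN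
  obtain ⟨e⟩ := hiso j
  have hj : 0 < n j := MinNormalAux.hn_pos G r M hmin n T hiso j
  apply hnonab j
  intro a b
  let a0 : Fin (n j) := ⟨0, hj⟩
  set u : M j := e.symm (Pi.mulSingle a0 a) with hu
  set v : M j := e.symm (Pi.mulSingle a0 b) with hv
  have hvC : (v : G) ∈ Subgroup.centralizer (M j : Set G) := by
    have := hNle v.2
    rw [hC, Subgroup.mem_iInf] at this
    exact this j
  have hcomm : (u : G) * (v : G) = (v : G) * (u : G) :=
    Subgroup.mem_centralizer_iff.1 hvC _ u.2
  have hcomm' : u * v = v * u := Subtype.ext hcomm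
  have := congrArg e hcomm'
  rw [map_mul, map_mul, hu, hv, e.apply_symm_apply, e.apply_symm_apply] at this
  have h0 := congrFun this a0
  simpa using h0

include hmin hall hnonab hiso in
lemma MinNormalAux.card_G_le :
    Nat.card G ≤ Nat.card (∀ i, MulAut (Fin (n i) → T i)) := by
  classical
  have hmap : ∀ (g : G) (i : Fin r),
      (M i).map (MulAut.conj g).toMonoidHom = M i := by
    intro g i
    apply le_antisymm
    · rintro _ ⟨x, hx, rfl⟩
      simpa using (hmin i).2.1.conj_mem x hx g
    · intro x hx
      refine ⟨g⁻¹ * x * g, by simpa using (hmin i).2.1.conj_mem' x hx g, ?_⟩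
      simp [MulAut.conj_apply]
      group
  set e : ∀ i, (M i) ≃* (Fin (n i) → T i) := fun i => (hiso i).some with he
  set Φ : G → ∀ i, MulAut (Fin (n i) → T i) := fun g i =>
    ((e i).symm.trans ((((MulAut.conj g).subgroupMap (M i)).trans
      (MulEquiv.subgroupCongr (hmap g i))).trans (e i))) with hΦ
  have hΦval : ∀ (g : G) (i : Fin r) (y : M i),
      Φ g i (e i y) = e i ⟨g * (y : G) * g⁻¹, by
        have := (hmin i).2.1.conj_mem (y : G) y.2 g; exact this⟩ := by
    intro g i y
    simp only [hΦ, MulEquiv.trans_apply, MulEquiv.symm_apply_apply]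
    congr 1
  have hΦinj : Function.Injective Φ := by
    intro g g' h
    have hkey : ∀ (i : Fin r) (x : G), x ∈ M i → g * x * g⁻¹ = g' * x * g'⁻¹ := by
      intro i x hx
      have h1 := hΦval g i ⟨x, hx⟩
      have h2 := hΦval g' i ⟨x, hx⟩
      rw [h] at h1
      have h3 := h1.symm.trans h2
      have h4 := (e i).injective h3
      simpa [Subtype.ext_iff] using h4
    have hgc : g'⁻¹ * g ∈ (⨅ i, Subgroup.centralizer (M i : Set G)) := by
      rw [Subgroup.mem_iInf]
      intro i
      rw [Subgroup.mem_centralizer_iff]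
      intro x hx
      have := hkey i x hx
      have h5 : x * (g'⁻¹ * g) = g'⁻¹ * (g' * x * g'⁻¹) * g := by group
      rw [h5, ← this]
      group
    rw [MinNormalAux.centralizers_trivial G r M hmin hall n T hnonab hiso,
      Subgroup.mem_bot] at hgc
    exact (inv_mul_eq_one.mp hgc).symm
  exact Nat.card_le_card_of_injective Φ hΦinj

end MainAux

/-- The purely numerical part of the argument. -/
lemma MinNormalAux.num_main (r : ℕ) (n : Fin r → ℕ) (A : Fin r → ℕ)
    (G : Type) [Group G] [Finite G]
    (hr : (Finset.univ : Finset (Fin r)).Nonempty)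
    (hn1 : ∀ i, 1 ≤ n i) (hA1 : ∀ i, 1 ≤ A i)
    (hcard : Nat.card G ≤ ∏ i, (n i ^ n i * A i ^ n i))
    (X : Fin r → ℝ)
    (hX : ∀ i, Real.logb 2 (A i) < X i) :
    Real.logb 2 (Nat.card G) <
      (∑ i, (n i : ℝ)) * Real.logb 2 (∑ i, (n i : ℝ)) + ∑ i, (n i : ℝ) * X i := by
  have h2 : (1:ℝ) < 2 := one_lt_two
  have hGpos : (0:ℝ) < Nat.card G := by exact_mod_cast Nat.card_pos
  have hni : ∀ i, (1:ℝ) ≤ (n i : ℝ) := fun i => by exact_mod_cast hn1 i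
  have hAi : ∀ i, (1:ℝ) ≤ (A i : ℝ) := fun i => by exact_mod_cast hA1 i
  have hstep1 : Real.logb 2 (Nat.card G) ≤
      ∑ i, ((n i : ℝ) * Real.logb 2 (n i) + (n i : ℝ) * Real.logb 2 (A i)) := by
    have hle : Real.logb 2 (Nat.card G) ≤
        Real.logb 2 ((∏ i, ((n i : ℝ) ^ n i * (A i : ℝ) ^ n i))) := by
      apply Real.logb_le_logb_of_le h2 hGpos
      calc (Nat.card G : ℝ) ≤ ((∏ i, (n i ^ n i * A i ^ n i) : ℕ) : ℝ) := by exact_mod_cast hcard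
        _ = ∏ i, ((n i : ℝ) ^ n i * (A i : ℝ) ^ n i) := by push_cast; ring
    refine hle.trans (le_of_eq ?_)
    rw [Real.logb_prod]
    · refine Finset.sum_congr rfl fun i _ => ?_
      have h3 : (0:ℝ) < (n i : ℝ) := lt_of_lt_of_le one_pos (hni i)
      have h4 : (0:ℝ) < (A i : ℝ) := lt_of_lt_of_le one_pos (hAi i)
      rw [Real.logb_mul (by positivity) (by positivity), Real.logb_pow, Real.logb_pow]
    · intro i _
      have h3 : (0:ℝ) < (n i : ℝ) := lt_of_lt_of_le one_pos (hni i)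
      have h4 : (0:ℝ) < (A i : ℝ) := lt_of_lt_of_le one_pos (hAi i)
      positivity
  have hnle : ∀ i, (n i : ℝ) ≤ ∑ j, (n j : ℝ) := fun i =>
    Finset.single_le_sum (f := fun j => (n j : ℝ))
      (fun j _ => le_trans zero_le_one (hni j)) (Finset.mem_univ i)
  have hstep2 : ∑ i, (n i : ℝ) * Real.logb 2 (n i) ≤
      (∑ i, (n i : ℝ)) * Real.logb 2 (∑ i, (n i : ℝ)) := by
    rw [Finset.sum_mul]
    refine Finset.sum_le_sum fun i _ => ?_
    refine mul_le_mul_of_nonneg_left ?_ (le_trans zero_le_one (hni i))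
    exact Real.logb_le_logb_of_le h2 (lt_of_lt_of_le one_pos (hni i)) (hnle i)
  have hstep3 : ∑ i, (n i : ℝ) * Real.logb 2 (A i) < ∑ i, (n i : ℝ) * X i := by
    refine Finset.sum_lt_sum_of_nonempty hr fun i _ => ?_
    exact mul_lt_mul_of_pos_left (hX i) (lt_of_lt_of_le one_pos (hni i))
  calc Real.logb 2 (Nat.card G)
      ≤ ∑ i, ((n i : ℝ) * Real.logb 2 (n i) + (n i : ℝ) * Real.logb 2 (A i)) := hstep1
    _ = (∑ i, (n i : ℝ) * Real.logb 2 (n i)) + ∑ i, (n i : ℝ) * Real.logb 2 (A i) :=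
        Finset.sum_add_distrib
    _ < (∑ i, (n i : ℝ)) * Real.logb 2 (∑ i, (n i : ℝ)) + ∑ i, (n i : ℝ) * X i :=
        add_lt_add_of_le_of_lt hstep2 hstep3

/-- Let `G` be a nontrivial finite group with trivial solvable radical, with distinct
minimal normal subgroups `M₁, …, M_r`, where `M i ≅ (T i)^(n i)` for nonabelian finite
simple groups `T i`. Setting `n = ∑ n i` and `k i = k*(T i)`, if `c₂ > 0` satisfies
`log₂|Aut T| < c₂ (log₂ k*(T))² log₂ log₂ k*(T)` for all nonabelian finite simple `T`, then
`log₂|G| < n log₂ n + c₂ ∑ i, n i (log₂ k i)² log₂ log₂ k i`. -/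
theorem logb_card_lt_of_trivial_radical
    (G : Type) [Group G] [Finite G] [Nontrivial G]
    (hrad : ∀ N : Subgroup G, N.Normal → IsSolvable N → N = ⊥)
    (r : ℕ) (M : Fin r → Subgroup G)
    (hmin : ∀ i, IsMinimalNormal (M i))
    (hinj : Function.Injective M)
    (hall : ∀ N : Subgroup G, IsMinimalNormal N → ∃ i, N = M i)
    (n : Fin r → ℕ) (T : Fin r → Type) [∀ i, Group (T i)] [∀ i, Finite (T i)]
    (hsimple : ∀ i, IsSimpleGroup (T i))
    (hnonab : ∀ i, ¬ ∀ a b : T i, a * b = b * a)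
    (hiso : ∀ i, Nonempty ((M i) ≃* (Fin (n i) → T i)))
    (c₂ : ℝ) (hc₂ : 0 < c₂)
    (hc₂' : ∀ (S : Type) [Group S] [Finite S], IsSimpleGroup S →
      (¬ ∀ a b : S, a * b = b * a) →
      Real.logb 2 (Nat.card (MulAut S)) <
        c₂ * (Real.logb 2 (numAutOrbits S)) ^ 2 *
          Real.logb 2 (Real.logb 2 (numAutOrbits S))) :
    Real.logb 2 (Nat.card G) <
      (∑ i, (n i : ℝ)) * Real.logb 2 (∑ i, (n i : ℝ)) +
        c₂ * ∑ i, (n i : ℝ) * (Real.logb 2 (numAutOrbits (T i))) ^ 2 *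
          Real.logb 2 (Real.logb 2 (numAutOrbits (T i))) := by
  classical
  have hn1 : ∀ i, 1 ≤ n i := MinNormalAux.hn_pos G r M hmin n T hiso
  have hr : (Finset.univ : Finset (Fin r)).Nonempty := by
    have htop : (⊤ : Subgroup G) ≠ ⊥ := by
      intro h
      obtain ⟨x, hx⟩ := exists_ne (1 : G)
      have : x ∈ (⊤ : Subgroup G) := trivial
      rw [h, Subgroup.mem_bot] at this
      exact hx this
    obtain ⟨N, hN, _⟩ := MinNormalAux.exists_minimalNormal_le
      (Nat.card (⊤ : Subgroup G)) (⊤ : Subgroup G) le_rfl inferInstance htop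
    obtain ⟨i, _⟩ := hall N hN
    exact ⟨i, Finset.mem_univ i⟩
  set A : Fin r → ℕ := fun i => Nat.card (MulAut (T i)) with hA
  have hA1 : ∀ i, 1 ≤ A i := fun i => Nat.card_pos
  have hcard : Nat.card G ≤ ∏ i, (n i ^ n i * A i ^ n i) := by
    calc Nat.card G ≤ Nat.card (∀ i, MulAut (Fin (n i) → T i)) :=
          MinNormalAux.card_G_le G r M hmin hall n T hnonab hiso
      _ = ∏ i, Nat.card (MulAut (Fin (n i) → T i)) := Nat.card_pi
      _ ≤ ∏ i, (n i ^ n i * A i ^ n i) := Finset.prod_le_prod' fun i _ =>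
          MinNormalAux.card_mulAut_pi_le (hsimple i) (hnonab i) (n i)
  have hmain := MinNormalAux.num_main r n A G hr hn1 hA1 hcard
    (fun i => c₂ * (Real.logb 2 (numAutOrbits (T i))) ^ 2 *
      Real.logb 2 (Real.logb 2 (numAutOrbits (T i))))
    (fun i => hc₂' (T i) (hsimple i) (hnonab i))
  have heq : c₂ * ∑ i, (n i : ℝ) * (Real.logb 2 (numAutOrbits (T i))) ^ 2 *
      Real.logb 2 (Real.logb 2 (numAutOrbits (T i)))
      = ∑ i, (n i : ℝ) * (c₂ * (Real.logb 2 (numAutOrbits (T i))) ^ 2 *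
        Real.logb 2 (Real.logb 2 (numAutOrbits (T i)))) := by
    rw [Finset.mul_sum]
    exact Finset.sum_congr rfl fun i _ => by ring
  rw [heq]
  exact hmain
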